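/- Let h₊ be the (R+1)×(R+1) symmetric tridiagonal matrix with zero diagonal except (h₊)_{R+1,R+1} = 1/x, x > 0, and off-diagonals J₁,…,J_R > 0. Then all eigenvalues of h₊ are simple, and exactly one eigenvalue exceeds ‖h̃‖ + J_R when 1/x > 2(‖h̃‖ + J_R), where h̃ is the top-left R×R submatrix (i.e., exactly one 'high-energy' eigenvalue exists, the rest lying in [−‖h̃‖ − J_R, ‖h̃‖ + J_R]). -/

import Mathlib

open scoped Matrix.Norms.L2Operator

/-- The real symmetric tridiagonal matrix with diagonal `d` and off-diagonal couplings
`J n` between coordinates `n` and `n+1` (0-indexed). -/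
def triMat (N : ℕ) (J d : ℕ → ℝ) : Matrix (Fin N) (Fin N) ℝ :=
  Matrix.of fun i j =>
    if (i : ℕ) + 1 = (j : ℕ) then J i
    else if (j : ℕ) + 1 = (i : ℕ) then J j
    else if i = j then d i else 0

/-- The matrix `h₊(x)`: tridiagonal with couplings `J₁,…,J_R`, zero diagonal except for the
entry `1/x` in position `(R+1,R+1)`. -/
noncomputable def hPlus (R : ℕ) (J : ℕ → ℝ) (x : ℝ) : Matrix (Fin (R + 1)) (Fin (R + 1)) ℝ :=
  triMat (R + 1) J (fun n => if n = R then 1 / x else 0)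

open Matrix

lemma triMat_apply (N : ℕ) (J d : ℕ → ℝ) (i j : Fin N) :
    triMat N J d i j = (if (i:ℕ)+1 = (j:ℕ) then J i else 0)
      + (if (j:ℕ)+1 = (i:ℕ) then J j else 0)
      + (if i = j then d i else 0) := by
  simp only [triMat, Matrix.of_apply]
  split_ifs with h1 h2 h3 <;> simp_all [Fin.ext_iff] <;> omega

lemma triMat_mulVec (N : ℕ) (J d : ℕ → ℝ) (v : Fin N → ℝ) (i : Fin N) :
    (triMat N J d *ᵥ v) i =
      (if h : (i:ℕ)+1 < N then J (i:ℕ) * v ⟨(i:ℕ)+1, h⟩ else 0)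
      + (if h : 0 < (i:ℕ) then J ((i:ℕ)-1) * v ⟨(i:ℕ)-1, by omega⟩ else 0)
      + d i * v i := by
  simp only [Matrix.mulVec, dotProduct, triMat_apply, add_mul]
  rw [Finset.sum_add_distrib, Finset.sum_add_distrib]
  congr 1
  · congr 1
    · by_cases h : (i:ℕ)+1 < N
      · rw [dif_pos h, Finset.sum_eq_single (⟨(i:ℕ)+1, h⟩ : Fin N)]
        · simp
        · intro b _ hb
          rw [if_neg, zero_mul]
          intro hc; exact hb (by apply Fin.ext; simp; omega)
        · simp
      · rw [dif_neg h]
        apply Finset.sum_eq_zero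
        intro b _
        rw [if_neg, zero_mul]
        omega
    · by_cases h : 0 < (i:ℕ)
      · rw [dif_pos h, Finset.sum_eq_single (⟨(i:ℕ)-1, by omega⟩ : Fin N)]
        · rw [if_pos (by simp; omega)]
        · intro b _ hb
          rw [if_neg, zero_mul]
          intro hc; exact hb (by apply Fin.ext; simp; omega)
        · simp
      · rw [dif_neg h]
        apply Finset.sum_eq_zero
        intro b _
        rw [if_neg, zero_mul]
        omega
  · rw [Finset.sum_eq_single i]
    · simp
    · intro b _ hb
      rw [if_neg (fun hc => hb hc.symm), zero_mul]
    · simp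

lemma v_mk_eq {N : ℕ} (v : Fin N → ℝ) {a b : ℕ} (e : a = b) (h : a < N) (h' : b < N) :
    v ⟨a, h⟩ = v ⟨b, h'⟩ := by subst e; rfl

lemma hPlus_mulVec_castSucc (n : ℕ) (J : ℕ → ℝ) (x : ℝ) (v : Fin (n+2) → ℝ) (i : Fin (n+1)) :
    (hPlus (n+1) J x *ᵥ v) i.castSucc =
      (triMat (n+1) J 0 *ᵥ fun k : Fin (n+1) => v k.castSucc) i
      + (if i = Fin.last n then J n * v (Fin.last (n+1)) else 0) := by
  have hi := i.isLt
  have hlast : Fin.last (n+1) = (⟨n+1, by omega⟩ : Fin (n+2)) := rfl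
  rw [hPlus, triMat_mulVec, triMat_mulVec]
  simp only [Fin.coe_castSucc, Pi.zero_apply, zero_mul, add_zero, Fin.castSucc_mk, hlast]
  rw [if_neg (by omega : ¬ (i:ℕ) = n + 1), zero_mul, add_zero]
  by_cases h : (i:ℕ) = n
  · rw [dif_pos (by omega : (i:ℕ)+1 < n+2), dif_neg (by omega : ¬ (i:ℕ)+1 < n+1),
      if_pos (by apply Fin.ext; simpa using h)]
    rw [v_mk_eq v (show (i:ℕ)+1 = n+1 by omega) (by omega) (by omega),
      show J (i:ℕ) = J n by rw [h]]
    by_cases h0 : 0 < (i:ℕ)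
    · rw [dif_pos h0]; ring
    · rw [dif_neg h0]; ring
  · rw [dif_pos (by omega : (i:ℕ)+1 < n+2), dif_pos (by omega : (i:ℕ)+1 < n+1),
      if_neg (by simp [Fin.ext_iff]; omega), add_zero]

lemma hPlus_mulVec_last (n : ℕ) (J : ℕ → ℝ) (x : ℝ) (v : Fin (n+2) → ℝ) :
    (hPlus (n+1) J x *ᵥ v) (Fin.last (n+1)) =
      J n * v ((Fin.last n).castSucc) + (1/x) * v (Fin.last (n+1)) := by
  have hlast : Fin.last (n+1) = (⟨n+1, by omega⟩ : Fin (n+2)) := rfl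
  have hlast2 : (Fin.last n).castSucc = (⟨n, by omega⟩ : Fin (n+2)) := rfl
  rw [hPlus, triMat_mulVec]
  simp only [hlast, hlast2]
  rw [dif_neg (by omega : ¬ (n+1)+1 < n+2), dif_pos (by omega : 0 < n+1),
    v_mk_eq v (show n+1-1 = n by omega) (by omega) (by omega),
    show J (n+1-1) = J n by norm_num]
  norm_num

lemma hPlus_quad (n : ℕ) (J : ℕ → ℝ) (x : ℝ) (v : Fin (n+2) → ℝ) :
    v ⬝ᵥ (hPlus (n+1) J x *ᵥ v) =
      (fun k : Fin (n+1) => v k.castSucc) ⬝ᵥ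
          (triMat (n+1) J 0 *ᵥ fun k : Fin (n+1) => v k.castSucc)
      + 2 * J n * v ((Fin.last n).castSucc) * v (Fin.last (n+1))
      + (1/x) * v (Fin.last (n+1))^2 := by
  rw [dotProduct, Fin.sum_univ_castSucc, hPlus_mulVec_last]
  have h1 : ∀ i : Fin (n+1), v i.castSucc * (hPlus (n+1) J x *ᵥ v) i.castSucc
      = v i.castSucc * (triMat (n+1) J 0 *ᵥ fun k : Fin (n+1) => v k.castSucc) i
        + (if i = Fin.last n then v i.castSucc * (J n * v (Fin.last (n+1))) else 0) := by
    intro i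
    rw [hPlus_mulVec_castSucc, mul_add, mul_ite, mul_zero]
  rw [Finset.sum_congr rfl (fun i _ => h1 i), Finset.sum_add_distrib,
    Finset.sum_ite_eq' Finset.univ (Fin.last n)
      (fun i => v i.castSucc * (J n * v (Fin.last (n+1)))),
    if_pos (Finset.mem_univ _)]
  rw [dotProduct]
  ring

lemma hPlus_vanish (n : ℕ) (J : ℕ → ℝ) (hJ : ∀ k < n+1, 0 < J k) (x μ : ℝ)
    (v : Fin (n+2) → ℝ) (hv : hPlus (n+1) J x *ᵥ v = μ • v)
    (h0 : v (Fin.last (n+1)) = 0) : v = 0 := by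
  have key : ∀ m : ℕ, ∀ i : Fin (n+2), n + 1 ≤ (i:ℕ) + m → v i = 0 := by
    intro m
    induction m with
    | zero =>
      intro i hi
      have : i = Fin.last (n+1) := Fin.ext (by simpa using by omega : (i:ℕ) = n+1)
      rw [this]; exact h0
    | succ m ih =>
      intro i hi
      by_cases hl : n + 1 ≤ (i:ℕ) + m
      · exact ih i hl
      · have hiv : (i:ℕ) + m + 1 = n + 1 := by omega
        have hi2 : (i:ℕ) + 1 < n + 2 := by omega
        set i' : Fin (n+2) := ⟨(i:ℕ)+1, hi2⟩ with hi'
        have hvi' : v i' = 0 := ih i' (by simp [hi']; omega)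
        have h1 : (hPlus (n+1) J x *ᵥ v) i' = μ * v i' := by rw [hv]; rfl
        rw [hPlus, triMat_mulVec] at h1
        rw [hvi', mul_zero, mul_zero, add_zero] at h1
        have hfwd : (if h : (i':ℕ)+1 < n+2 then J (i':ℕ) * v ⟨(i':ℕ)+1, h⟩ else 0) = 0 := by
          by_cases h : (i':ℕ)+1 < n+2
          · rw [dif_pos h]
            have : v ⟨(i':ℕ)+1, h⟩ = 0 := ih ⟨(i':ℕ)+1, h⟩ (by simp [hi']; omega)
            rw [this, mul_zero]
          · rw [dif_neg h]
        rw [hfwd, zero_add] at h1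
        rw [dif_pos (by simp [hi'] : 0 < (i':ℕ))] at h1
        rw [v_mk_eq v (show (i':ℕ)-1 = (i:ℕ) by simp [hi']) (by omega) i.isLt] at h1
        have hJi : 0 < J ((i':ℕ)-1) := hJ _ (by simp [hi']; omega)
        have : v ⟨(i:ℕ), i.isLt⟩ = 0 := by
          rcases mul_eq_zero.mp h1 with h | h
          · exact absurd h hJi.ne'
          · exact h
        simpa using this
  funext i
  exact key (n+1) i (by omega)

lemma quad_abs_le (N : ℕ) (A : Matrix (Fin N) (Fin N) ℝ) (w : Fin N → ℝ) :
    |w ⬝ᵥ (A *ᵥ w)| ≤ ‖A‖ * ∑ i, w i ^ 2 := by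
  set a : EuclideanSpace ℝ (Fin N) := WithLp.toLp 2 w with ha
  set b : EuclideanSpace ℝ (Fin N) := WithLp.toLp 2 (A *ᵥ w) with hb
  have hab : w ⬝ᵥ (A *ᵥ w) = inner ℝ a b := by
    simp [PiLp.inner_apply, RCLike.inner_apply, dotProduct, ha, hb, mul_comm]
  have hnorm : ∑ i, w i ^ 2 = ‖a‖ ^ 2 := by
    rw [← real_inner_self_eq_norm_sq]
    simp only [ha, PiLp.inner_apply, WithLp.ofLp_toLp, RCLike.inner_apply, conj_trivial, sq]
  have hble : ‖b‖ ≤ ‖A‖ * ‖a‖ := A.l2_opNorm_mulVec a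
  rw [hab, hnorm]
  calc |inner ℝ a b| ≤ ‖a‖ * ‖b‖ := abs_real_inner_le_norm a b
    _ ≤ ‖a‖ * (‖A‖ * ‖a‖) := by
        apply mul_le_mul_of_nonneg_left hble (norm_nonneg _)
    _ = ‖A‖ * ‖a‖ ^ 2 := by ring

lemma hPlus_quad_lower (n : ℕ) (J : ℕ → ℝ) (x : ℝ) (hJn : 0 < J n) (hx : 0 < x)
    (v : Fin (n+2) → ℝ) (hv1 : ∑ i, v i ^ 2 = 1) :
    -(‖triMat (n+1) J 0‖ + J n) ≤ v ⬝ᵥ (hPlus (n+1) J x *ᵥ v) := by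
  rw [hPlus_quad]
  set w : Fin (n+1) → ℝ := fun k : Fin (n+1) => v k.castSucc with hw
  set S := ∑ i : Fin (n+1), w i ^ 2 with hSdef
  have hq := abs_le.mp (quad_abs_le (n+1) (triMat (n+1) J 0) w)
  have hsum : S + v (Fin.last (n+1))^2 = 1 := by
    rw [← hv1, Fin.sum_univ_castSucc (f := fun i : Fin (n+2) => v i ^ 2)]
  have ha : v ((Fin.last n).castSucc) ^ 2 ≤ S := by
    have h := Finset.single_le_sum (f := fun i => w i ^ 2)
      (fun i _ => sq_nonneg _) (Finset.mem_univ (Fin.last n))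
    simpa [hw] using h
  have hS0 : 0 ≤ S := Finset.sum_nonneg fun i _ => sq_nonneg _
  have h0 : 0 < 1/x := by positivity
  have hN := norm_nonneg (triMat (n+1) J 0)
  nlinarith [sq_nonneg (v ((Fin.last n).castSucc) + v (Fin.last (n+1))),
    sq_nonneg (v ((Fin.last n).castSucc) - v (Fin.last (n+1))),
    sq_nonneg (v (Fin.last (n+1)))]

lemma hPlus_quad_upper (n : ℕ) (J : ℕ → ℝ) (x : ℝ) (hJn : 0 ≤ J n)
    (v : Fin (n+2) → ℝ) (h0 : v (Fin.last (n+1)) = 0) :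
    v ⬝ᵥ (hPlus (n+1) J x *ᵥ v) ≤ (‖triMat (n+1) J 0‖ + J n) * (v ⬝ᵥ v) := by
  rw [hPlus_quad, h0]
  set w : Fin (n+1) → ℝ := fun k : Fin (n+1) => v k.castSucc with hw
  set S := ∑ i : Fin (n+1), w i ^ 2 with hSdef
  have hq := abs_le.mp (quad_abs_le (n+1) (triMat (n+1) J 0) w)
  have hvv : v ⬝ᵥ v = S := by
    have h1 : v ⬝ᵥ v = ∑ i, v i ^ 2 := by simp [dotProduct, sq]
    rw [h1, Fin.sum_univ_castSucc (f := fun i : Fin (n+2) => v i ^ 2), h0]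
    simp
    rfl
  have hS0 : 0 ≤ S := Finset.sum_nonneg fun i _ => sq_nonneg _
  have hN := norm_nonneg (triMat (n+1) J 0)
  rw [hvv]
  nlinarith

/-- With positive couplings and `1/x > 2(‖h̃‖ + J_R)`, all eigenvalues of `h₊(x)` are
simple, and exactly one eigenvalue exceeds `‖h̃‖ + J_R`, all others lying in
`[−‖h̃‖ − J_R, ‖h̃‖ + J_R]` (here `h̃ = triMat R J 0` is the top-left `R×R` block, with
`J R` the 0-indexed name of the coupling `J_R`). -/
theorem stmt19 (R : ℕ) (hR : 1 ≤ R) (J : ℕ → ℝ) (hJ : ∀ k < R, 0 < J k)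
    (x : ℝ) (hx : 0 < x)
    (hxsmall : 2 * (‖triMat R J 0‖ + J (R - 1)) < 1 / x)
    (hH : (hPlus R J x).IsHermitian) :
    Function.Injective hH.eigenvalues ∧
      ∃ i : Fin (R + 1), ‖triMat R J 0‖ + J (R - 1) < hH.eigenvalues i ∧
        ∀ j : Fin (R + 1), j ≠ i →
          hH.eigenvalues j ∈
            Set.Icc (-(‖triMat R J 0‖ + J (R - 1))) (‖triMat R J 0‖ + J (R - 1)) := by
  obtain ⟨n, rfl⟩ : ∃ n, R = n + 1 := ⟨R - 1, by omega⟩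
  have hJn : 0 < J n := hJ n (by omega)
  simp only [Nat.add_sub_cancel] at hxsmall ⊢
  set c : ℝ := ‖triMat (n+1) J 0‖ + J n with hc
  have hc0 : 0 ≤ c := add_nonneg (norm_nonneg _) hJn.le
  have hcx : c < 1/x := by nlinarith
  have heig : ∀ j, hPlus (n+1) J x *ᵥ ⇑(hH.eigenvectorBasis j)
      = hH.eigenvalues j • ⇑(hH.eigenvectorBasis j) := hH.mulVec_eigenvectorBasis
  have hinner : ∀ (y z : EuclideanSpace ℝ (Fin (n+2))),
      inner ℝ y z = (y : Fin (n+2) → ℝ) ⬝ᵥ (z : Fin (n+2) → ℝ) := by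
    intro y z
    simp [PiLp.inner_apply, RCLike.inner_apply, dotProduct, mul_comm]
  have horth : ∀ i j, ⇑(hH.eigenvectorBasis i) ⬝ᵥ ⇑(hH.eigenvectorBasis j)
      = if i = j then (1:ℝ) else 0 := by
    intro i j
    have h2 := orthonormal_iff_ite.mp hH.eigenvectorBasis.orthonormal i j
    rw [hinner] at h2
    simpa using h2
  have hsq : ∀ j, ∑ i : Fin (n+2), (hH.eigenvectorBasis j i)^2 = 1 := by
    intro j
    have h := horth j j
    rw [if_pos rfl] at h
    simpa [dotProduct, sq] using h
  have hray : ∀ j, ⇑(hH.eigenvectorBasis j) ⬝ᵥ (hPlus (n+1) J x *ᵥ ⇑(hH.eigenvectorBasis j))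
      = hH.eigenvalues j := by
    intro j
    rw [heig j, dotProduct_smul, horth j j, if_pos rfl, smul_eq_mul, mul_one]
  have hsym : ∀ (y z : Fin (n+2) → ℝ),
      y ⬝ᵥ (hPlus (n+1) J x *ᵥ z) = (hPlus (n+1) J x *ᵥ y) ⬝ᵥ z := by
    intro y z
    rw [Matrix.dotProduct_mulVec, ← Matrix.mulVec_transpose]
    congr 1
    rw [← Matrix.conjTranspose_eq_transpose_of_trivial, hH]
  -- all eigenvalues are at least -c
  have hlow : ∀ j, -c ≤ hH.eigenvalues j := by
    intro j
    rw [← hray j]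
    exact hPlus_quad_lower n J x hJn hx _ (hsq j)
  -- an eigenvector whose last coordinate vanishes forces a contradiction
  have hvan : ∀ i, hH.eigenvectorBasis i (Fin.last (n+1)) = 0 → False := by
    intro i hl
    have h0 : ⇑(hH.eigenvectorBasis i) = 0 :=
      hPlus_vanish n J hJ x (hH.eigenvalues i) _ (heig i) hl
    have h1 := horth i i
    rw [if_pos rfl, h0] at h1
    simp at h1
  -- injectivity
  have hinj : Function.Injective hH.eigenvalues := by
    intro i j hij
    by_contra hne
    set u : Fin (n+2) → ℝ := ⇑(hH.eigenvectorBasis i) with hu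
    set w : Fin (n+2) → ℝ := ⇑(hH.eigenvectorBasis j) with hwd
    set v : Fin (n+2) → ℝ := w (Fin.last (n+1)) • u - u (Fin.last (n+1)) • w with hv
    have hveig : hPlus (n+1) J x *ᵥ v = hH.eigenvalues i • v := by
      rw [hv, Matrix.mulVec_sub, Matrix.mulVec_smul, Matrix.mulVec_smul, heig i, heig j, ← hij]
      module
    have hvlast : v (Fin.last (n+1)) = 0 := by
      simp [hv]
      ring
    have hv0 : v = 0 := hPlus_vanish n J hJ x (hH.eigenvalues i) v hveig hvlast
    have hd : v ⬝ᵥ w = - u (Fin.last (n+1)) := by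
      rw [hv, sub_dotProduct, smul_dotProduct, smul_dotProduct]
      rw [show u ⬝ᵥ w = 0 from by simpa [hne] using horth i j,
        show w ⬝ᵥ w = 1 from by simpa using horth j j]
      simp
    rw [hv0] at hd
    simp at hd
    exact hvan i hd
  -- at most one eigenvalue above c
  have hone : ∀ i j, i ≠ j → c < hH.eigenvalues i → c < hH.eigenvalues j → False := by
    intro i j hne hi hj
    set u : Fin (n+2) → ℝ := ⇑(hH.eigenvectorBasis i) with hu
    set w : Fin (n+2) → ℝ := ⇑(hH.eigenvectorBasis j) with hwd
    set v : Fin (n+2) → ℝ := w (Fin.last (n+1)) • u - u (Fin.last (n+1)) • w with hv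
    have hvlast : v (Fin.last (n+1)) = 0 := by
      simp [hv]
      ring
    have hvu : v ⬝ᵥ u = w (Fin.last (n+1)) := by
      rw [hv, sub_dotProduct, smul_dotProduct, smul_dotProduct,
        show u ⬝ᵥ u = 1 from by simpa using horth i i,
        show w ⬝ᵥ u = 0 from by simpa [Ne.symm hne] using horth j i]
      simp
    have hvw : v ⬝ᵥ w = - u (Fin.last (n+1)) := by
      rw [hv, sub_dotProduct, smul_dotProduct, smul_dotProduct,
        show u ⬝ᵥ w = 0 from by simpa [hne] using horth i j,
        show w ⬝ᵥ w = 1 from by simpa using horth j j]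
      simp
    have hmv : hPlus (n+1) J x *ᵥ v
        = w (Fin.last (n+1)) • (hH.eigenvalues i • u) - u (Fin.last (n+1)) • (hH.eigenvalues j • w) := by
      rw [hv, Matrix.mulVec_sub, Matrix.mulVec_smul, Matrix.mulVec_smul, heig i, heig j]
    have hqv : v ⬝ᵥ (hPlus (n+1) J x *ᵥ v)
        = hH.eigenvalues i * (w (Fin.last (n+1)))^2 + hH.eigenvalues j * (u (Fin.last (n+1)))^2 := by
      rw [hmv, dotProduct_sub, dotProduct_smul, dotProduct_smul,
        dotProduct_smul, dotProduct_smul, hvu, hvw]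
      simp [smul_eq_mul]
      ring
    have hvv : v ⬝ᵥ v = (w (Fin.last (n+1)))^2 + (u (Fin.last (n+1)))^2 := by
      nth_rewrite 2 [hv]
      rw [dotProduct_sub, dotProduct_smul, dotProduct_smul, hvu, hvw]
      simp [smul_eq_mul]
      ring
    have hup := hPlus_quad_upper n J x hJn.le v hvlast
    rw [hqv, hvv] at hup
    have hul2 : (u (Fin.last (n+1)))^2 ≤ 0 := by
      nlinarith [sq_nonneg (w (Fin.last (n+1))), sq_nonneg (u (Fin.last (n+1)))]
    have hul : u (Fin.last (n+1)) = 0 := by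
      nlinarith [sq_nonneg (u (Fin.last (n+1)))]
    exact hvan i hul
  -- existence of an eigenvalue above c
  have hex : ∃ i, c < hH.eigenvalues i := by
    by_contra hno
    push_neg at hno
    set e : Fin (n+2) → ℝ := Pi.single (Fin.last (n+1)) 1 with he
    have hq : e ⬝ᵥ (hPlus (n+1) J x *ᵥ e) = 1/x := by
      rw [hPlus_quad]
      have h1 : e (Fin.last (n+1)) = 1 := by simp [he]
      have h2 : e ((Fin.last n).castSucc) = 0 := by
        rw [he, Pi.single_apply, if_neg]
        simp [Fin.ext_iff]
      have h3 : (fun k : Fin (n+1) => e k.castSucc) = (fun _ => 0) := by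
        funext k
        rw [he, Pi.single_apply, if_neg (Fin.castSucc_lt_last k).ne]
      rw [h1, h2, h3]
      simp [dotProduct]
    have hterm : ∀ j, ⇑(hH.eigenvectorBasis j) ⬝ᵥ (hPlus (n+1) J x *ᵥ e)
        = hH.eigenvalues j * (⇑(hH.eigenvectorBasis j) ⬝ᵥ e) := by
      intro j
      rw [hsym, heig j, smul_dotProduct, smul_eq_mul]
    have hpar := hH.eigenvectorBasis.sum_inner_mul_inner
      (x := WithLp.toLp 2 e) (y := WithLp.toLp 2 e)
    have hexp := hH.eigenvectorBasis.sum_inner_mul_inner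
      (x := WithLp.toLp 2 e)
      (y := WithLp.toLp 2 (hPlus (n+1) J x *ᵥ e : Fin (n+2) → ℝ))
    simp only [hinner, WithLp.ofLp_toLp] at hpar hexp
    have he1 : e ⬝ᵥ e = 1 := by simp [he, dotProduct_single]
    rw [he1] at hpar
    rw [hq] at hexp
    have hle : 1/x ≤ c := by
      calc 1/x = ∑ j, (e ⬝ᵥ ⇑(hH.eigenvectorBasis j)) * (⇑(hH.eigenvectorBasis j) ⬝ᵥ (hPlus (n+1) J x *ᵥ e)) := hexp.symm
        _ = ∑ j, (e ⬝ᵥ ⇑(hH.eigenvectorBasis j)) * (hH.eigenvalues j * (⇑(hH.eigenvectorBasis j) ⬝ᵥ e)) := by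
            exact Finset.sum_congr rfl fun j _ => by rw [hterm j]
        _ ≤ ∑ j, c * ((e ⬝ᵥ ⇑(hH.eigenvectorBasis j)) * (⇑(hH.eigenvectorBasis j) ⬝ᵥ e)) := by
            apply Finset.sum_le_sum
            intro j _
            rw [dotProduct_comm (⇑(hH.eigenvectorBasis j)) e]
            nlinarith [sq_nonneg (e ⬝ᵥ ⇑(hH.eigenvectorBasis j)), hno j,
              sq_nonneg (e ⬝ᵥ ⇑(hH.eigenvectorBasis j))]
        _ = c * ∑ j, (e ⬝ᵥ ⇑(hH.eigenvectorBasis j)) * (⇑(hH.eigenvectorBasis j) ⬝ᵥ e) := by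
            rw [Finset.mul_sum]
        _ = c := by
            have hpar' : (∑ j, (e ⬝ᵥ ⇑(hH.eigenvectorBasis j)) * (⇑(hH.eigenvectorBasis j) ⬝ᵥ e)) = (1:ℝ) := hpar
            rw [hpar', mul_one]
    linarith
  obtain ⟨i0, hi0⟩ := hex
  refine ⟨hinj, i0, hi0, ?_⟩
  intro j hj
  constructor
  · exact hlow j
  · by_contra hgt
    push_neg at hgt
    exact hone j i0 hj hgt hi0
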